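/- arXiv:1409.6427 — 2 statements merged into one kernel-verified Lean document; each statement's English description precedes it below -/
import Mathlib

section
/- Equivalence of extensions along j and along the collage inclusion: let ν : i₀ ∘ j ⟹ i₁ exhibit C(j) as the collage (lax colimit) of j : A ⟶ B in a bicategory M, and let ρ : r ∘ j ⟹ f be a triangle over X. Let ⟨r,ρ⟩ : C(j) ⟶ X be the 1-morphism induced by the universal property, with isomorphisms f ≅ ⟨r,ρ⟩ ∘ i₁ and r ≅ ⟨r,ρ⟩ ∘ i₀ conjugating ⟨r,ρ⟩ ∘ ν to ρ. Then the isomorphism f ≅ ⟨r,ρ⟩ ∘ i₁ exhibits ⟨r,ρ⟩ as a right extension of f along i₁ if and only if ρ exhibits r as a right extension of f along j. -/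
open CategoryTheory Bicategory

universe w v u

variable {M : Type u} [Bicategory.{w, v} M]

/-- The precomposition functor `M(j,X) : M(B,X) ⥤ M(A,X)`. -/
@[simps]
def precompFunctor {A B : M} (j : A ⟶ B) (X : M) : (B ⟶ X) ⥤ (A ⟶ X) where
  obj g := j ≫ g
  map θ := j ◁ θ

/-- Pasting with a triangle `ν : j ≫ i₀ ⟶ i₁` (a candidate collage cocone) gives a functor
`M(C, X) ⥤ M(j,X)/M(A,X)`, sending `h` to `(i₀ ≫ h, i₁ ≫ h, h ∘ ν)`, where the target is
the comma category of `M(j,X) : M(B,X) ⥤ M(A,X)` with the identity of `M(A,X)`. -/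
@[simps]
def pasteFunctor {A B C : M} {j : A ⟶ B} {i₁ : A ⟶ C} {i₀ : B ⟶ C}
    (ν : j ≫ i₀ ⟶ i₁) (X : M) :
    (C ⟶ X) ⥤ Comma (precompFunctor j X) (𝟭 (A ⟶ X)) where
  obj h := ⟨i₀ ≫ h, i₁ ≫ h, (α_ j i₀ h).inv ≫ ν ▷ h⟩
  map η := ⟨i₀ ◁ η, i₁ ◁ η, by
    dsimp [precompFunctor]
    rw [associator_inv_naturality_right_assoc, whisker_exchange]; simp⟩

/-- `ν : j ≫ i₀ ⟶ i₁` exhibits `C` as the collage (lax colimit) of `j : A ⟶ B`: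
for every `X`, pasting with `ν` is an equivalence `M(C, X) ≃ M(j,X)/M(A,X)`. -/
def IsCollage {A B C : M} {j : A ⟶ B} {i₁ : A ⟶ C} {i₀ : B ⟶ C}
    (ν : j ≫ i₀ ⟶ i₁) : Prop :=
  ∀ X : M, (pasteFunctor ν X).IsEquivalence


/-- `ρ : j ≫ r ⟶ f` exhibits `r` as a right extension of `f` along `j`. -/
def IsRightExt {A B X : M} (j : A ⟶ B) (f : A ⟶ X)
    (r : B ⟶ X) (ρ : j ≫ r ⟶ f) : Prop :=
  ∀ g : B ⟶ X, Function.Bijective (fun θ : g ⟶ r => j ◁ θ ≫ ρ)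

/-- Naturality of pasting with `ν`. -/
lemma paste_natural_aux {A B C X : M} {j : A ⟶ B} {i₁ : A ⟶ C} {i₀ : B ⟶ C}
    (ν : j ≫ i₀ ⟶ i₁) {k h : C ⟶ X} (θ : k ⟶ h) :
    j ◁ (i₀ ◁ θ) ≫ (α_ j i₀ h).inv ≫ ν ▷ h =
      (α_ j i₀ k).inv ≫ ν ▷ k ≫ i₁ ◁ θ := by
  rw [associator_inv_naturality_right_assoc, whisker_exchange]

/-- The hom-equivalence induced by a bicategorical adjunction `i₀ ⊣ i₀s` on hom-categories
out of the targets. -/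
@[simps]
def adjHomEquiv {B C X : M} {i₀ : B ⟶ C} {i₀s : C ⟶ B}
    (adj : Bicategory.Adjunction i₀ i₀s) (g : B ⟶ X) (h : C ⟶ X) :
    (g ⟶ i₀ ≫ h) ≃ (i₀s ≫ g ⟶ h) where
  toFun φ := i₀s ◁ φ ≫ (α_ i₀s i₀ h).inv ≫ adj.counit ▷ h ≫ (λ_ h).hom
  invFun ψ := (λ_ g).inv ≫ adj.unit ▷ g ≫ (α_ i₀ i₀s g).hom ≫ i₀ ◁ ψ
  left_inv φ := by
    have lt : adj.unit ▷ i₀ ⊗≫ i₀ ◁ adj.counit = (λ_ i₀).hom ≫ (ρ_ i₀).inv :=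
      adj.left_triangle
    calc (λ_ g).inv ≫ adj.unit ▷ g ≫ (α_ i₀ i₀s g).hom ≫
          i₀ ◁ (i₀s ◁ φ ≫ (α_ i₀s i₀ h).inv ≫ adj.counit ▷ h ≫ (λ_ h).hom)
        = 𝟙 g ⊗≫ (adj.unit ▷ g ≫ (i₀ ≫ i₀s) ◁ φ) ⊗≫
            i₀ ◁ adj.counit ▷ h ⊗≫ 𝟙 (i₀ ≫ h) := by
          bicategory
      _ = 𝟙 g ⊗≫ (𝟙 B ◁ φ ≫ adj.unit ▷ (i₀ ≫ h)) ⊗≫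
            i₀ ◁ adj.counit ▷ h ⊗≫ 𝟙 (i₀ ≫ h) := by
          rw [whisker_exchange]
      _ = 𝟙 g ⊗≫ 𝟙 B ◁ φ ⊗≫ (adj.unit ▷ i₀ ⊗≫ i₀ ◁ adj.counit) ▷ h ⊗≫
            𝟙 (i₀ ≫ h) := by
          bicategory
      _ = 𝟙 g ⊗≫ 𝟙 B ◁ φ ⊗≫ ((λ_ i₀).hom ≫ (ρ_ i₀).inv) ▷ h ⊗≫ 𝟙 (i₀ ≫ h) := by
          rw [lt]
      _ = φ := by bicategory
  right_inv ψ := by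
    have rt : i₀s ◁ adj.unit ⊗≫ adj.counit ▷ i₀s = (ρ_ i₀s).hom ≫ (λ_ i₀s).inv :=
      adj.right_triangle
    calc i₀s ◁ ((λ_ g).inv ≫ adj.unit ▷ g ≫ (α_ i₀ i₀s g).hom ≫ i₀ ◁ ψ) ≫
          (α_ i₀s i₀ h).inv ≫ adj.counit ▷ h ≫ (λ_ h).hom
        = 𝟙 (i₀s ≫ g) ⊗≫ i₀s ◁ adj.unit ▷ g ⊗≫
            ((i₀s ≫ i₀) ◁ ψ ≫ adj.counit ▷ h) ⊗≫ 𝟙 h := by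
          bicategory
      _ = 𝟙 (i₀s ≫ g) ⊗≫ i₀s ◁ adj.unit ▷ g ⊗≫
            (adj.counit ▷ (i₀s ≫ g) ≫ 𝟙 C ◁ ψ) ⊗≫ 𝟙 h := by
          rw [whisker_exchange]
      _ = 𝟙 (i₀s ≫ g) ⊗≫ (i₀s ◁ adj.unit ⊗≫ adj.counit ▷ i₀s) ▷ g ⊗≫
            𝟙 C ◁ ψ ⊗≫ 𝟙 h := by
          bicategory
      _ = 𝟙 (i₀s ≫ g) ⊗≫ ((ρ_ i₀s).hom ≫ (λ_ i₀s).inv) ▷ g ⊗≫ 𝟙 C ◁ ψ ⊗≫ 𝟙 h := by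
          rw [rt]
      _ = ψ := by bicategory

/-- Equivalence of extensions along `j` and along the collage inclusion `i₁`: let
`ν : j ≫ i₀ ⟶ i₁` exhibit `C` as the collage of `j : A ⟶ B`, with `i₀` a left adjoint
(`i₀ ⊣ i₀✶`) such that the isomorphism `κ : i₁ ≫ i₀✶ ≅ j` is compatible with `ν`
(its inverse is the mate of `ν`).  Let `ρ : j ≫ r ⟶ f` be a triangle over `X`, and let
`h = ⟨r,ρ⟩ : C ⟶ X` come with isomorphisms `e₁ : i₁ ≫ h ≅ f` and `e₀ : i₀ ≫ h ≅ r`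
conjugating `h ∘ ν` to `ρ`.  Then `e₁` exhibits `h` as a right extension of `f` along
`i₁` if and only if `ρ` exhibits `r` as a right extension of `f` along `j`. -/
theorem isRightExt_along_collage_iff
    {A B C X : M} {j : A ⟶ B} {i₁ : A ⟶ C} {i₀ : B ⟶ C}
    (ν : j ≫ i₀ ⟶ i₁) (hcol : IsCollage ν)
    (i₀s : C ⟶ B) (adj : Bicategory.Adjunction i₀ i₀s)
    (κ : i₁ ≫ i₀s ≅ j)
    (hκ : κ.inv = (ρ_ j).inv ≫ j ◁ adj.unit ≫ (α_ j i₀ i₀s).inv ≫ ν ▷ i₀s)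
    {f : A ⟶ X} {r : B ⟶ X} (ρ : j ≫ r ⟶ f)
    (h : C ⟶ X) (e₁ : i₁ ≫ h ≅ f) (e₀ : i₀ ≫ h ≅ r)
    (conj : (α_ j i₀ h).inv ≫ ν ▷ h ≫ e₁.hom = j ◁ e₀.hom ≫ ρ) :
    IsRightExt i₁ f h e₁.hom ↔ IsRightExt j f r ρ := by
  haveI hP := hcol X
  haveI : (pasteFunctor ν X).Faithful := hP.faithful
  haveI : (pasteFunctor ν X).Full := hP.full
  constructor
  · -- extension along `i₁` implies extension along `j`
    intro hext g
    -- the transpose map along the adjunction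
    have key : ∀ θ : g ⟶ r,
        j ◁ θ ≫ ρ =
          (κ.inv ▷ g ≫ (α_ i₁ i₀s g).hom) ≫
            (i₁ ◁ (adjHomEquiv adj g h (θ ≫ e₀.inv)) ≫ e₁.hom) := by
      intro θ
      have lt : adj.unit ▷ i₀ ⊗≫ i₀ ◁ adj.counit = (λ_ i₀).hom ≫ (ρ_ i₀).inv :=
        adj.left_triangle
      rw [hκ]
      calc j ◁ θ ≫ ρ
          = j ◁ (θ ≫ e₀.inv) ≫ ((α_ j i₀ h).inv ≫ ν ▷ h ≫ e₁.hom) := by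
            rw [conj]; simp [Bicategory.whiskerLeft_comp]
        _ = 𝟙 (j ≫ g) ⊗≫ j ◁ (θ ≫ e₀.inv) ⊗≫
              j ◁ ((λ_ i₀).hom ≫ (ρ_ i₀).inv) ▷ h ⊗≫ ν ▷ h ⊗≫ e₁.hom := by
            bicategory
        _ = 𝟙 (j ≫ g) ⊗≫ j ◁ (θ ≫ e₀.inv) ⊗≫
              j ◁ (adj.unit ▷ i₀ ⊗≫ i₀ ◁ adj.counit) ▷ h ⊗≫ ν ▷ h ⊗≫ e₁.hom := by
            rw [lt]
        _ = 𝟙 (j ≫ g) ⊗≫ j ◁ (𝟙 B ◁ (θ ≫ e₀.inv) ≫ adj.unit ▷ (i₀ ≫ h)) ⊗≫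
              j ◁ (i₀ ◁ adj.counit) ▷ h ⊗≫ ν ▷ h ⊗≫ e₁.hom := by
            bicategory
        _ = 𝟙 (j ≫ g) ⊗≫ j ◁ (adj.unit ▷ g ≫ (i₀ ≫ i₀s) ◁ (θ ≫ e₀.inv)) ⊗≫
              j ◁ (i₀ ◁ adj.counit) ▷ h ⊗≫ ν ▷ h ⊗≫ e₁.hom := by
            rw [← whisker_exchange]
        _ = 𝟙 (j ≫ g) ⊗≫ j ◁ adj.unit ▷ g ⊗≫
              ((j ≫ i₀) ◁ (i₀s ◁ (θ ≫ e₀.inv) ≫ (α_ i₀s i₀ h).inv ≫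
                adj.counit ▷ h ≫ (λ_ h).hom) ≫ ν ▷ h) ⊗≫ e₁.hom := by
            bicategory
        _ = 𝟙 (j ≫ g) ⊗≫ j ◁ adj.unit ▷ g ⊗≫
              (ν ▷ (i₀s ≫ g) ≫ i₁ ◁ (i₀s ◁ (θ ≫ e₀.inv) ≫ (α_ i₀s i₀ h).inv ≫
                adj.counit ▷ h ≫ (λ_ h).hom)) ⊗≫ e₁.hom := by
            rw [whisker_exchange]
        _ = (((ρ_ j).inv ≫ j ◁ adj.unit ≫ (α_ j i₀ i₀s).inv ≫ ν ▷ i₀s) ▷ g ≫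
              (α_ i₁ i₀s g).hom) ≫
              (i₁ ◁ (i₀s ◁ (θ ≫ e₀.inv) ≫ (α_ i₀s i₀ h).inv ≫
                adj.counit ▷ h ≫ (λ_ h).hom) ≫ e₁.hom) := by
            bicategory
    have hfun : (fun θ : g ⟶ r => j ◁ θ ≫ ρ) =
        (fun x : i₁ ≫ i₀s ≫ g ⟶ f => (κ.inv ▷ g ≫ (α_ i₁ i₀s g).hom) ≫ x) ∘
          (fun ψ : i₀s ≫ g ⟶ h => i₁ ◁ ψ ≫ e₁.hom) ∘
          (adjHomEquiv adj g h) ∘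
          (fun θ : g ⟶ r => θ ≫ e₀.inv) := funext key
    rw [hfun]
    have b₄ : Function.Bijective
        (fun x : i₁ ≫ i₀s ≫ g ⟶ f => (κ.inv ▷ g ≫ (α_ i₁ i₀s g).hom) ≫ x) := by
      exact Equiv.bijective
        ⟨fun x => (κ.inv ▷ g ≫ (α_ i₁ i₀s g).hom) ≫ x,
         fun y => ((α_ i₁ i₀s g).inv ≫ κ.hom ▷ g) ≫ y,
         fun x => by simp, fun y => by simp⟩
    have b₁ : Function.Bijective (fun θ : g ⟶ r => θ ≫ e₀.inv) := by
      exact Equiv.bijective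
        ⟨fun θ => θ ≫ e₀.inv, fun φ => φ ≫ e₀.hom,
         fun θ => by simp, fun φ => by simp⟩
    exact b₄.comp ((hext (i₀s ≫ g)).comp ((adjHomEquiv adj g h).bijective.comp b₁))
  · -- extension along `j` implies extension along `i₁`
    intro hr k
    have key : ∀ θ : k ⟶ h,
        j ◁ (i₀ ◁ θ ≫ e₀.hom) ≫ ρ =
          ((α_ j i₀ k).inv ≫ ν ▷ k) ≫ (i₁ ◁ θ ≫ e₁.hom) := by
      intro θ
      rw [Bicategory.whiskerLeft_comp, Category.assoc, ← conj]
      rw [← Category.assoc, ← Category.assoc]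
      have := paste_natural_aux ν θ
      simp only [Category.assoc] at this ⊢
      rw [reassoc_of% this]
    constructor
    · intro θ₁ θ₂ heq
      dsimp at heq
      have h1 : i₁ ◁ θ₁ = i₁ ◁ θ₂ := by
        rwa [cancel_mono e₁.hom] at heq
      have h0 : i₀ ◁ θ₁ = i₀ ◁ θ₂ := by
        have := (hr (i₀ ≫ k)).1 (a₁ := i₀ ◁ θ₁ ≫ e₀.hom) (a₂ := i₀ ◁ θ₂ ≫ e₀.hom) (by
          dsimp
          rw [key θ₁, key θ₂, h1])
        rwa [cancel_mono e₀.hom] at this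
      apply (pasteFunctor ν X).map_injective
      ext
      · exact h0
      · exact h1
    · intro α
      obtain ⟨β, hβ⟩ := (hr (i₀ ≫ k)).2 (((α_ j i₀ k).inv ≫ ν ▷ k) ≫ (α ≫ e₁.inv ≫ e₁.hom))
      dsimp at hβ
      let m : (pasteFunctor ν X).obj k ⟶ (pasteFunctor ν X).obj h :=
        ⟨β ≫ e₀.inv, α ≫ e₁.inv, by
          show j ◁ (β ≫ e₀.inv) ≫ ((α_ j i₀ h).inv ≫ ν ▷ h) = ((α_ j i₀ k).inv ≫ ν ▷ k) ≫ α ≫ e₁.inv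
          have hconj : (α_ j i₀ h).inv ≫ ν ▷ h = j ◁ e₀.hom ≫ ρ ≫ e₁.inv := by
            rw [← reassoc_of% conj]; simp
          rw [Bicategory.whiskerLeft_comp, Category.assoc, hconj]
          simp only [← Bicategory.whiskerLeft_comp_assoc, Iso.inv_hom_id,
            Bicategory.whiskerLeft_id, Category.id_comp]
          simp only [Category.assoc] at hβ ⊢
          rw [reassoc_of% hβ]
          simp⟩
      obtain ⟨θ, hθ⟩ := (pasteFunctor ν X).map_surjective m
      refine ⟨θ, ?_⟩
      have := congrArg CommaMorphism.right hθ
      simp only [pasteFunctor_map_right] at this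
      dsimp
      rw [this]
      simp [m]
      exact (show (α ≫ e₁.inv) ≫ e₁.hom = α by simp)
end

section
/- Tensoring squares are BC: in a monoidal bicategory M with a sub-bicategory K of left adjoints closed under ⊗, for left adjoints u : A ⟶ B and h : H ⟶ K in K, the square with horizontal sides 1 ⊗ u and vertical sides h ⊗ 1, commuting up to the interchange isomorphism (h ⊗ 1) ∘ (1 ⊗ u) ≅ (1 ⊗ u) ∘ (h ⊗ 1), has invertible mate (1_H ⊗ u) ∘ (h ⊗ 1_A)* ⟹ (h ⊗ 1_B)* ∘ (1_K ⊗ u); i.e. it is an exact square. -/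
open CategoryTheory Bicategory

universe w v u

variable {M : Type u} [Bicategory.{w, v} M]

/-- The mate `q✶ ≫ p ⟶ j ≫ b✶` of a square `lam : p ≫ b ⟶ q ≫ j`, formed using the
adjunctions `q ⊣ q✶` and `b ⊣ b✶` of the vertical sides. -/
def mateOfSquare {S A B U : M}
    {q : S ⟶ A} {p : S ⟶ U} {j : A ⟶ B} {b : U ⟶ B}
    (qs : A ⟶ S) (adjq : Bicategory.Adjunction q qs)
    (bs : B ⟶ U) (adjb : Bicategory.Adjunction b bs)
    (lam : p ≫ b ⟶ q ≫ j) : qs ≫ p ⟶ j ≫ bs :=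
  qs ◁ ((ρ_ p).inv ≫ p ◁ adjb.unit ≫ (α_ p b bs).inv ≫ lam ▷ bs ≫ (α_ q j bs).hom) ≫
    (α_ qs q (j ≫ bs)).inv ≫ adjq.counit ▷ (j ≫ bs) ≫ (λ_ (j ≫ bs)).hom

/-- Auxiliary abstract form of the Beck–Chevalley computation. -/
theorem mateOfSquare_eq_aux {a b a' b' : M}
    {fh : a ⟶ b} {fhs : b ⟶ a} {gh : a' ⟶ b'} {ghs : b' ⟶ a'}
    {p : a ⟶ a'} {j : b ⟶ b'}
    {fI : a ⟶ a} {fC : a ⟶ a} {fC' : b ⟶ b} {fI' : b ⟶ b}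
    {gI : a' ⟶ a'} {gC : a' ⟶ a'}
    (φI : fI ≅ 𝟙 a) (φC : fC ≅ fh ≫ fhs) (φC' : fC' ≅ fhs ≫ fh) (φI' : fI' ≅ 𝟙 b)
    (γI : gI ≅ 𝟙 a') (γC : gC ≅ gh ≫ ghs)
    (fu : fI ⟶ fC) (gu : gI ⟶ gC) (fε : fC' ⟶ fI')
    (nh : fh ≫ j ≅ p ≫ gh) (nhs : fhs ≫ p ≅ j ≫ ghs)
    (nI : fI ≫ p ≅ p ≫ gI) (nC : fC ≫ p ≅ p ≫ gC)
    (hnat : fu ▷ p ≫ nC.hom = nI.hom ≫ p ◁ gu)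
    (hid : nI.hom ≫ p ◁ γI.hom = φI.hom ▷ p ≫ (λ_ p).hom ≫ (ρ_ p).inv)
    (hcomp : nC.hom ≫ p ◁ γC.hom =
      φC.hom ▷ p ≫ (α_ fh fhs p).hom ≫ fh ◁ nhs.hom ≫ (α_ fh j ghs).inv ≫
        nh.hom ▷ ghs ≫ (α_ p gh ghs).hom)
    (adjF : Bicategory.Adjunction fh fhs)
    (hFunit : adjF.unit = φI.inv ≫ fu ≫ φC.hom)
    (hFcounit : adjF.counit = φC'.inv ≫ fε ≫ φI'.hom)
    (adjG : Bicategory.Adjunction gh ghs)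
    (hGunit : adjG.unit = γI.inv ≫ gu ≫ γC.hom) :
    mateOfSquare (q := fh) (p := p) (j := j) (b := gh) fhs adjF ghs adjG nh.inv = nhs.hom := by
  have A : p ◁ γC.hom ≫ (α_ p gh ghs).inv ≫ nh.inv ▷ ghs =
      nC.inv ≫ φC.hom ▷ p ≫ (α_ fh fhs p).hom ≫ fh ◁ nhs.hom ≫ (α_ fh j ghs).inv := by
    rw [← cancel_epi nC.hom]
    simp [reassoc_of% hcomp]
  have B : p ◁ gu ≫ nC.inv = nI.inv ≫ fu ▷ p := by
    rw [← cancel_epi nI.hom, ← cancel_mono nC.hom]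
    simp [hnat]
  have C : p ◁ γI.inv ≫ nI.inv = (ρ_ p).hom ≫ (λ_ p).inv ≫ φI.inv ▷ p := by
    rw [← cancel_mono nI.hom, ← cancel_mono (p ◁ γI.hom)]
    simp [hid]
  dsimp only [mateOfSquare]
  rw [hGunit, hFcounit]
  calc
    _ = 𝟙 _ ⊗≫ fhs ◁ (p ◁ γI.inv ≫ p ◁ gu ≫
          (p ◁ γC.hom ≫ (α_ p gh ghs).inv ≫ nh.inv ▷ ghs)) ⊗≫
          (φC'.inv ≫ fε ≫ φI'.hom) ▷ (j ≫ ghs) ⊗≫ 𝟙 _ := by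
      bicategory
    _ = 𝟙 _ ⊗≫ fhs ◁ (p ◁ γI.inv ≫ (p ◁ gu ≫ nC.inv) ≫
          φC.hom ▷ p ≫ (α_ fh fhs p).hom ≫ fh ◁ nhs.hom ≫ (α_ fh j ghs).inv) ⊗≫
          (φC'.inv ≫ fε ≫ φI'.hom) ▷ (j ≫ ghs) ⊗≫ 𝟙 _ := by
      rw [A]; bicategory
    _ = 𝟙 _ ⊗≫ fhs ◁ ((p ◁ γI.inv ≫ nI.inv) ≫ fu ▷ p ≫
          φC.hom ▷ p ≫ (α_ fh fhs p).hom ≫ fh ◁ nhs.hom ≫ (α_ fh j ghs).inv) ⊗≫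
          (φC'.inv ≫ fε ≫ φI'.hom) ▷ (j ≫ ghs) ⊗≫ 𝟙 _ := by
      rw [B]; bicategory
    _ = 𝟙 _ ⊗≫ fhs ◁ ((φI.inv ≫ fu ≫ φC.hom) ▷ p) ⊗≫
          fhs ◁ fh ◁ nhs.hom ⊗≫
          (φC'.inv ≫ fε ≫ φI'.hom) ▷ (j ≫ ghs) ⊗≫ 𝟙 _ := by
      rw [C]; bicategory
    _ = 𝟙 _ ⊗≫ fhs ◁ (adjF.unit ▷ p) ⊗≫
          ((fhs ≫ fh) ◁ nhs.hom ≫ adjF.counit ▷ (j ≫ ghs)) ⊗≫ 𝟙 _ := by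
      rw [← hFunit, ← hFcounit]; bicategory
    _ = 𝟙 _ ⊗≫ fhs ◁ (adjF.unit ▷ p) ⊗≫ adjF.counit ▷ (fhs ≫ p) ⊗≫
          𝟙 b ◁ nhs.hom ⊗≫ 𝟙 _ := by
      rw [whisker_exchange]; bicategory
    _ = 𝟙 _ ⊗≫ rightZigzag adjF.unit adjF.counit ▷ p ⊗≫ nhs.hom := by
      bicategory
    _ = nhs.hom := by
      rw [adjF.right_triangle]; bicategory

/-- Tensoring squares are Beck–Chevalley (exact).  We model the monoidal structure of
the monoidal bicategory `M` through the pseudofunctors `F = - ⊗ A` and `G = - ⊗ B` and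
the strong (pseudo)natural transformation `η = - ⊗ u : F ⟶ G` induced by a 1-morphism
`u : A ⟶ B`; thus `F.map h = h ⊗ 𝟙 A`, `G.map h = h ⊗ 𝟙 B`, `η.app H = 𝟙 H ⊗ u`, and
the naturality 2-isomorphism of `η` at `h` is the interchange isomorphism
`(h ⊗ 𝟙) ∘ (𝟙 ⊗ u) ≅ (𝟙 ⊗ u) ∘ (h ⊗ 𝟙)`.  If `h ⊣ h✶` and the tensored adjunctions
`h ⊗ 𝟙 ⊣ h✶ ⊗ 𝟙` are the images of `h ⊣ h✶` under `F` and `G` (their units and counits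
are the canonical images of those of `h ⊣ h✶`), then the mate
`(𝟙 ⊗ u) ∘ (h ⊗ 𝟙)✶ ⟶ (h ⊗ 𝟙)✶ ∘ (𝟙 ⊗ u)` of the interchange square is invertible:
the square is exact. -/
theorem tensor_square_BC (F G : Pseudofunctor M M)
    (η : Oplax.StrongTrans F.toOplax G.toOplax)
    {H K : M} (h : H ⟶ K) (hs : K ⟶ H) (adj : Bicategory.Adjunction h hs)
    (adjF : Bicategory.Adjunction (F.map h) (F.map hs))
    (hFunit : adjF.unit =
      (F.mapId H).inv ≫ F.map₂ adj.unit ≫ (F.mapComp h hs).hom)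
    (hFcounit : adjF.counit =
      (F.mapComp hs h).inv ≫ F.map₂ adj.counit ≫ (F.mapId K).hom)
    (adjG : Bicategory.Adjunction (G.map h) (G.map hs))
    (hGunit : adjG.unit =
      (G.mapId H).inv ≫ G.map₂ adj.unit ≫ (G.mapComp h hs).hom)
    (hGcounit : adjG.counit =
      (G.mapComp hs h).inv ≫ G.map₂ adj.counit ≫ (G.mapId K).hom) :
    IsIso (mateOfSquare (q := F.map h) (p := η.app H) (j := η.app K) (b := G.map h)
      (F.map hs) adjF (G.map hs) adjG (η.naturality h).inv) := by
  have key := mateOfSquare_eq_aux (M := M)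
    (fh := F.map h) (fhs := F.map hs) (gh := G.map h) (ghs := G.map hs)
    (p := η.app H) (j := η.app K)
    (F.mapId H) (F.mapComp h hs) (F.mapComp hs h) (F.mapId K)
    (G.mapId H) (G.mapComp h hs)
    (F.map₂ adj.unit) (G.map₂ adj.unit) (F.map₂ adj.counit)
    (η.naturality h) (η.naturality hs) (η.naturality (𝟙 H)) (η.naturality (h ≫ hs))
    (η.naturality_naturality adj.unit) (η.naturality_id H) (η.naturality_comp h hs)
    adjF hFunit hFcounit adjG hGunit
  refine (congrArg IsIso key).mpr ?_
  exact Iso.isIso_hom _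
end
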